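/- Define β(p) = 1/(p+1) for primes p ≡ 1 (mod 4) and β(p) = (p+1)/(p²+1) for primes p ≡ 3 (mod 4). Then the product over all odd primes p of (1 − β(p))/(1 − p⁻¹) converges, and 2 · ∏_{p odd prime} (1 − β(p))/(1 − p⁻¹) = 2 · L(2,χ₄); equivalently, ∏_{p ≡ 1 (4)} p²/(p² − 1) · ∏_{p ≡ 3 (4)} p²/(p² + 1) = L(2,χ₄), where L(2,χ₄) = Σ_{k=0}^∞ (−1)^k/(2k+1)². -/

import Mathlib

/-- `L(2,χ₄) = Σ_{k≥0} (−1)^k/(2k+1)²`, the Dirichlet `L`-series at `2` of the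
nontrivial character mod `4`. -/
noncomputable def Lchi4 : ℝ := ∑' k : ℕ, (-1 : ℝ) ^ k / (2 * (k : ℝ) + 1) ^ 2

/-- `β(p) = 1/(p+1)` for `p ≡ 1 (mod 4)` and `β(p) = (p+1)/(p²+1)` for `p ≡ 3 (mod 4)`. -/
noncomputable def betaP (p : ℕ) : ℝ :=
  if p % 4 = 1 then 1 / ((p : ℝ) + 1) else ((p : ℝ) + 1) / ((p : ℝ) ^ 2 + 1)

noncomputable def chi4 (n : ℕ) : ℝ := if n % 4 = 1 then 1 else if n % 4 = 3 then -1 else 0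

lemma chi4_mul (m n : ℕ) : chi4 (m * n) = chi4 m * chi4 n := by
  have h4 : (m * n) % 4 = m % 4 * (n % 4) % 4 := Nat.mul_mod m n 4
  have hm : m % 4 = 0 ∨ m % 4 = 1 ∨ m % 4 = 2 ∨ m % 4 = 3 := by omega
  have hn : n % 4 = 0 ∨ n % 4 = 1 ∨ n % 4 = 2 ∨ n % 4 = 3 := by omega
  rcases hm with hm | hm | hm | hm <;> rcases hn with hn | hn | hn | hn <;>
    simp [chi4, h4, hm, hn]

noncomputable def fc : ℕ →*₀ ℝ where
  toFun n := chi4 n / (n : ℝ) ^ 2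
  map_zero' := by simp [chi4]
  map_one' := by simp [chi4]
  map_mul' m n := by
    push_cast
    rw [chi4_mul, mul_pow, mul_div_mul_comm]

lemma fc_apply (n : ℕ) : fc n = chi4 n / (n : ℝ) ^ 2 := rfl

lemma abs_chi4_le (n : ℕ) : |chi4 n| ≤ 1 := by
  unfold chi4; split_ifs <;> norm_num

lemma fc_summable : Summable (fun n => ‖fc n‖) := by
  refine Summable.of_nonneg_of_le (fun n => norm_nonneg _) (fun n => ?_)
    (Real.summable_nat_pow_inv.mpr one_lt_two)
  rw [fc_apply, Real.norm_eq_abs, abs_div, abs_pow, Nat.abs_cast]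
  calc |chi4 n| / (n : ℝ) ^ 2 = |chi4 n| * ((n : ℝ) ^ 2)⁻¹ := div_eq_mul_inv _ _
    _ ≤ 1 * ((n : ℝ) ^ 2)⁻¹ :=
        mul_le_mul_of_nonneg_right (abs_chi4_le n) (inv_nonneg.2 (sq_nonneg _))
    _ = ((n : ℝ) ^ 2)⁻¹ := one_mul _

lemma fc_tsum : ∑' n, fc n = ∑' k : ℕ, (-1 : ℝ) ^ k / (2 * (k : ℝ) + 1) ^ 2 := by
  have hinj : Function.Injective (fun k : ℕ => 2 * k + 1) := by
    intro a b h; simp only [] at h; omega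
  have hsupp : Function.support (fun n => fc n) ⊆ Set.range (fun k : ℕ => 2 * k + 1) := by
    intro n hn
    have : chi4 n ≠ 0 := by
      intro h; apply hn; simp [fc_apply, h]
    have hmod : n % 4 = 1 ∨ n % 4 = 3 := by
      by_contra hc
      push_neg at hc
      simp [chi4, hc.1, hc.2] at this
    exact ⟨n / 2, by simp only []; omega⟩
  rw [← hinj.tsum_eq hsupp]
  refine tsum_congr fun k => ?_
  have hcast : ((2 * k + 1 : ℕ) : ℝ) = 2 * (k : ℝ) + 1 := by push_cast; ring
  rcases Nat.even_or_odd k with hk | hk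
  · have h1 : (2 * k + 1) % 4 = 1 := by
      obtain ⟨j, rfl⟩ := hk; omega
    simp [fc_apply, chi4, h1, hcast, hk.neg_one_pow]
  · have h3 : (2 * k + 1) % 4 = 3 := by
      obtain ⟨j, rfl⟩ := hk; omega
    simp [fc_apply, chi4, h3, hcast, hk.neg_one_pow, neg_div]

lemma fc_prime_abs_le {p : ℕ} (hp : p.Prime) : |fc p| ≤ 1 / 4 := by
  have h2 : (2 : ℝ) ≤ (p : ℝ) := by exact_mod_cast hp.two_le
  have hp2 : (4 : ℝ) ≤ (p : ℝ) ^ 2 := by nlinarith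
  rw [fc_apply, abs_div, abs_pow, Nat.abs_cast]
  rw [div_le_div_iff₀ (by positivity) (by norm_num)]
  calc |chi4 p| * 4 ≤ 1 * 4 := by
        have := abs_chi4_le p; linarith
    _ = 4 := by ring
    _ ≤ (p : ℝ) ^ 2 := hp2
    _ = 1 * (p : ℝ) ^ 2 := (one_mul _).symm
  
lemma one_sub_fc_pos {p : ℕ} (hp : p.Prime) : 0 < 1 - fc p := by
  have h := fc_prime_abs_le hp
  have := abs_le.mp h
  linarith [this.2]

lemma abs_log_one_sub_inv_le {x : ℝ} (hx : |x| ≤ 1 / 2) :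
    |Real.log (1 - x)⁻¹| ≤ 2 * |x| := by
  have hax := abs_le.mp hx
  have h1 : 0 < 1 - x := by linarith [hax.2]
  rw [Real.log_inv, abs_neg]
  rw [abs_le]
  constructor
  · have hub : Real.log (1 - x) ≤ (1 - x) - 1 := Real.log_le_sub_one_of_pos h1
    -- need -(2|x|) ≤ log (1-x); use lower bound
    have hlb : 1 - (1 - x)⁻¹ ≤ Real.log (1 - x) := Real.one_sub_inv_le_log_of_pos h1
    have key : 1 ≤ (1 + 2 * |x|) * (1 - x) := by
      nlinarith [neg_abs_le x, le_abs_self x, abs_nonneg x]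
    have hinv : (1 - x)⁻¹ ≤ 1 + 2 * |x| := by
      calc (1 - x)⁻¹ = 1 / (1 - x) := (one_div _).symm
        _ ≤ 1 + 2 * |x| := by rw [div_le_iff₀ h1]; linarith
    nlinarith [abs_nonneg x]
  · have hub : Real.log (1 - x) ≤ (1 - x) - 1 := Real.log_le_sub_one_of_pos h1
    nlinarith [abs_nonneg x, neg_abs_le x, le_abs_self x]

noncomputable def ell (n : ℕ) : ℝ := if n.Prime then Real.log ((1 - fc n)⁻¹) else 0

lemma ell_summable : Summable ell := by
  refine Summable.of_norm_bounded (fc_summable.mul_left 2) fun n => ?_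
  unfold ell
  split_ifs with hn
  · have h := fc_prime_abs_le hn
    have := abs_log_one_sub_inv_le (x := fc n) (by linarith)
    simpa [Real.norm_eq_abs] using this
  · simp [norm_nonneg]

lemma ell_prime {p : ℕ} (hp : p.Prime) : ell p = Real.log ((1 - fc p)⁻¹) := if_pos hp

/-- Key: for any predicate Q on ℕ, the product of (1 - fc p)⁻¹ over primes satisfying Q
has product exp of sum of ell. -/
lemma hasProd_class (Q : ℕ → Prop) :
    HasProd (fun p : {p : ℕ // p.Prime ∧ Q p} => (1 - fc p.1)⁻¹)
      (Real.exp (∑' p : {p : ℕ // p.Prime ∧ Q p}, ell p.1)) := by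
  have hs : Summable (fun p : {p : ℕ // p.Prime ∧ Q p} => ell p.1) :=
    ell_summable.comp_injective (fun a b h => Subtype.ext h)
  have := hs.hasSum.rexp
  refine this.congr_fun fun p => ?_
  show _ = Real.exp (ell p.1)
  rw [ell_prime p.2.1, Real.exp_log (inv_pos.2 (one_sub_fc_pos p.2.1))]

lemma fc_two : fc 2 = 0 := by
  have : (2 : ℕ) % 4 = 2 := rfl
  simp [fc_apply, chi4, this]

lemma tprod_odd_eq :
    ∏' p : {p : ℕ // p.Prime ∧ p % 2 = 1}, (1 - fc p.1)⁻¹ = Lchi4 := by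
  have hinj : Function.Injective
      (fun p : {p : ℕ // p.Prime ∧ p % 2 = 1} => (⟨p.1, p.2.1⟩ : Nat.Primes)) := by
    intro a b h
    simp only [Subtype.mk.injEq] at h
    exact Subtype.ext h
  have hsupp : Function.mulSupport (fun q : Nat.Primes => (1 - fc q.1)⁻¹) ⊆
      Set.range (fun p : {p : ℕ // p.Prime ∧ p % 2 = 1} => (⟨p.1, p.2.1⟩ : Nat.Primes)) := by
    intro q hq
    by_cases h2 : q.1 % 2 = 1
    · exact ⟨⟨q.1, q.2, h2⟩, rfl⟩
    · exfalso
      apply hq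
      have : q.1 = 2 := q.2.even_iff.mp (Nat.even_iff.mpr (by omega))
      show (1 - fc q.1)⁻¹ = 1
      rw [this, fc_two]; norm_num
  calc ∏' p : {p : ℕ // p.Prime ∧ p % 2 = 1}, (1 - fc p.1)⁻¹
      = ∏' q : Nat.Primes, (1 - fc q.1)⁻¹ := hinj.tprod_eq hsupp
    _ = ∑' n, fc n := EulerProduct.eulerProduct_completely_multiplicative_tprod fc_summable
    _ = Lchi4 := fc_tsum

def e1 : {p : ℕ // p.Prime ∧ p % 4 = 1} ≃
    {q : {p : ℕ // p.Prime ∧ p % 2 = 1} // q.1 % 4 = 1} where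
  toFun p := ⟨⟨p.1, p.2.1, by omega⟩, p.2.2⟩
  invFun x := ⟨x.1.1, x.1.2.1, x.2⟩
  left_inv p := rfl
  right_inv x := rfl

def e3 : {p : ℕ // p.Prime ∧ p % 4 = 3} ≃
    {q : {p : ℕ // p.Prime ∧ p % 2 = 1} // ¬ q.1 % 4 = 1} where
  toFun p := ⟨⟨p.1, p.2.1, by omega⟩, by show ¬ (p.1 % 4 = 1); have := p.2.2; omega⟩
  invFun x := ⟨x.1.1, x.1.2.1, by have h2 := x.1.2.2; have h1 := x.2; omega⟩
  left_inv p := rfl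
  right_inv x := rfl

lemma tsum_split :
    (∑' p : {p : ℕ // p.Prime ∧ p % 4 = 1}, ell p.1) +
      (∑' p : {p : ℕ // p.Prime ∧ p % 4 = 3}, ell p.1) =
      ∑' p : {p : ℕ // p.Prime ∧ p % 2 = 1}, ell p.1 := by
  set s : Set {p : ℕ // p.Prime ∧ p % 2 = 1} := {q | q.1 % 4 = 1} with hs
  have hsum : Summable (fun p : {p : ℕ // p.Prime ∧ p % 2 = 1} => ell p.1) :=
    ell_summable.comp_injective (fun a b h => Subtype.ext h)
  rw [← Summable.tsum_add_tsum_compl (hsum.subtype s) (hsum.subtype sᶜ)]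
  congr 1
  · exact e1.tsum_eq (fun x : s => ell x.1.1)
  · exact e3.tsum_eq (fun x : ↥sᶜ => ell x.1.1)

lemma factor_odd {p : ℕ} (hp : p.Prime) (h2 : p % 2 = 1) :
    (1 - betaP p) / (1 - ((p : ℝ))⁻¹) = (1 - fc p)⁻¹ := by
  have hp3 : 3 ≤ p := by have := hp.two_le; omega
  have hx : (3 : ℝ) ≤ (p : ℝ) := by exact_mod_cast hp3
  have hx0 : (p : ℝ) ≠ 0 := by linarith
  have hx1 : (p : ℝ) - 1 ≠ 0 := by linarith
  have hxp1 : (p : ℝ) + 1 ≠ 0 := by linarith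
  have hsq : (p : ℝ) ^ 2 - 1 ≠ 0 := by nlinarith
  have hsq1 : (p : ℝ) ^ 2 + 1 ≠ 0 := by nlinarith
  have hd1 : 1 - ((p : ℝ))⁻¹ ≠ 0 := by
    have : ((p : ℝ))⁻¹ ≤ 1 / 3 := by
      rw [inv_eq_one_div, div_le_div_iff₀ (by linarith) (by norm_num)]; linarith
    intro h; rw [sub_eq_zero] at h; rw [← h] at this; norm_num at this
  rcases (by omega : p % 4 = 1 ∨ p % 4 = 3) with h4 | h4
  · have hchi : chi4 p = 1 := by simp [chi4, h4]
    rw [betaP, if_pos h4, fc_apply, hchi]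
    rw [div_eq_iff hd1]
    field_simp
    ring
  · have hchi : chi4 p = -1 := by simp [chi4, h4]
    rw [betaP, if_neg (by omega), fc_apply, hchi]
    rw [div_eq_iff hd1]
    field_simp
    rw [sub_neg_eq_add]
    field_simp
    ring

lemma factor1 {p : ℕ} (hp : p.Prime) (h4 : p % 4 = 1) :
    (p : ℝ) ^ 2 / ((p : ℝ) ^ 2 - 1) = (1 - fc p)⁻¹ := by
  have hx : (2 : ℝ) ≤ (p : ℝ) := by exact_mod_cast hp.two_le
  have hx0 : (p : ℝ) ≠ 0 := by linarith
  have hsq : (p : ℝ) ^ 2 - 1 ≠ 0 := by nlinarith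
  have hchi : chi4 p = 1 := by simp [chi4, h4]
  rw [fc_apply, hchi]
  have h : 1 - 1 / (p : ℝ) ^ 2 = ((p : ℝ) ^ 2 - 1) / (p : ℝ) ^ 2 := by
    field_simp
  rw [h, inv_div]

lemma factor3 {p : ℕ} (hp : p.Prime) (h4 : p % 4 = 3) :
    (p : ℝ) ^ 2 / ((p : ℝ) ^ 2 + 1) = (1 - fc p)⁻¹ := by
  have hx : (2 : ℝ) ≤ (p : ℝ) := by exact_mod_cast hp.two_le
  have hx0 : (p : ℝ) ≠ 0 := by linarith
  have hchi : chi4 p = -1 := by simp [chi4, h4]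
  rw [fc_apply, hchi]
  have h : 1 - (-1) / (p : ℝ) ^ 2 = ((p : ℝ) ^ 2 + 1) / (p : ℝ) ^ 2 := by
    field_simp
    ring
  rw [h, inv_div]

theorem stmt12 :
    Multipliable (fun p : {p : ℕ // p.Prime ∧ p % 2 = 1} =>
      (1 - betaP p.1) / (1 - ((p.1 : ℝ))⁻¹)) ∧
    2 * (∏' p : {p : ℕ // p.Prime ∧ p % 2 = 1},
        (1 - betaP p.1) / (1 - ((p.1 : ℝ))⁻¹)) = 2 * Lchi4 ∧
    (∏' p : {p : ℕ // p.Prime ∧ p % 4 = 1}, ((p.1 : ℝ) ^ 2 / ((p.1 : ℝ) ^ 2 - 1))) *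
      (∏' p : {p : ℕ // p.Prime ∧ p % 4 = 3}, ((p.1 : ℝ) ^ 2 / ((p.1 : ℝ) ^ 2 + 1))) =
      Lchi4 := by
  have hcongr : (fun p : {p : ℕ // p.Prime ∧ p % 2 = 1} =>
      (1 - betaP p.1) / (1 - ((p.1 : ℝ))⁻¹)) =
      fun p : {p : ℕ // p.Prime ∧ p % 2 = 1} => (1 - fc p.1)⁻¹ :=
    funext fun p => factor_odd p.2.1 p.2.2
  have hOdd := hasProd_class (fun p => p % 2 = 1)
  have h1 := hasProd_class (fun p => p % 4 = 1)
  have h3 := hasProd_class (fun p => p % 4 = 3)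
  have hExpOdd : Real.exp (∑' p : {p : ℕ // p.Prime ∧ p % 2 = 1}, ell p.1) = Lchi4 := by
    rw [← hOdd.tprod_eq]
    exact tprod_odd_eq
  refine ⟨?_, ?_, ?_⟩
  · rw [hcongr]
    exact hOdd.multipliable
  · rw [hcongr, hOdd.tprod_eq, hExpOdd]
  · have hp1 : (fun p : {p : ℕ // p.Prime ∧ p % 4 = 1} =>
        ((p.1 : ℝ) ^ 2 / ((p.1 : ℝ) ^ 2 - 1))) =
        fun p : {p : ℕ // p.Prime ∧ p % 4 = 1} => (1 - fc p.1)⁻¹ :=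
      funext fun p => factor1 p.2.1 p.2.2
    have hp3 : (fun p : {p : ℕ // p.Prime ∧ p % 4 = 3} =>
        ((p.1 : ℝ) ^ 2 / ((p.1 : ℝ) ^ 2 + 1))) =
        fun p : {p : ℕ // p.Prime ∧ p % 4 = 3} => (1 - fc p.1)⁻¹ :=
      funext fun p => factor3 p.2.1 p.2.2
    rw [hp1, hp3, h1.tprod_eq, h3.tprod_eq, ← Real.exp_add, tsum_split, hExpOdd]
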